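/- A single large swap strictly outperforms two consecutive smaller swaps: if φ < 1, then for x, y > 0 and reserves r0, r1 > 0, the output of swapping x+y at once exceeds the total output of swapping x followed by y: (x+y)·SX(x+y, r0, r1) > x·α + y·β, where α = SX(x, r0, r1) and β = SX(y, r0+x, r1−α·x). -/

import Mathlib

theorem stmt9 (φ x y r0 r1 : ℝ) (hφ0 : 0 < φ) (hφ1 : φ < 1)
    (hx : 0 < x) (hy : 0 < y) (hr0 : 0 < r0) (hr1 : 0 < r1) :
    let α := φ * r1 / (r0 + φ * x)
    let β := φ * (r1 - α * x) / ((r0 + x) + φ * y)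
    (x + y) * (φ * r1 / (r0 + φ * (x + y))) > x * α + y * β := by
  intro α β
  have hD1 : 0 < r0 + φ * x := by positivity
  have hD2 : 0 < (r0 + x) + φ * y := by positivity
  have hD : 0 < r0 + φ * (x + y) := by positivity
  have hα : r1 - α * x = r1 * r0 / (r0 + φ * x) := by
    rw [show α = φ * r1 / (r0 + φ * x) from rfl]; field_simp; ring
  have hβ : β = φ * (r1 * r0) / ((r0 + φ * x) * ((r0 + x) + φ * y)) := by
    rw [show β = φ * (r1 - α * x) / ((r0 + x) + φ * y) from rfl, hα]
    field_simp
  rw [hβ, show α = φ * r1 / (r0 + φ * x) from rfl, gt_iff_lt, ← sub_pos]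
  have key : (x + y) * (φ * r1 / (r0 + φ * (x + y))) -
      (x * (φ * r1 / (r0 + φ * x)) + y * (φ * (r1 * r0) / ((r0 + φ * x) * ((r0 + x) + φ * y)))) =
      φ * r1 * (x * y * (1 - φ) * r0) /
        ((r0 + φ * (x + y)) * ((r0 + φ * x) * ((r0 + x) + φ * y))) := by
    field_simp
    ring
  rw [key]
  have h1 : 0 < 1 - φ := by linarith
  have hnum : 0 < φ * r1 * (x * y * (1 - φ) * r0) := by positivity
  exact div_pos hnum (by positivity)
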